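/- Let 0 < s < 1 be real and t ∈ ℝ. Then the function ξ ↦ e^{2π s ξ}/(1 + e^{2πξ}) is integrable on ℝ and 2 ∫_ℝ (e^{2π s ξ}/(1 + e^{2πξ})) e^{-2π i t ξ} dξ = 1 / sin(π(s - i t)). -/

import Mathlib

open MeasureTheory Set Complex

noncomputable def ψfun (x : ℝ) : ℝ := (Real.log x - Real.log (1 - x)) / (2 * Real.pi)

lemma psi_hasDeriv {x : ℝ} (hx : x ∈ Ioo (0:ℝ) 1) :
    HasDerivAt ψfun (1 / (2 * Real.pi * (x * (1 - x)))) x := by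
  obtain ⟨h0, h1⟩ := hx
  have hx1 : (1:ℝ) - x > 0 := by linarith
  have h1' : HasDerivAt (fun y : ℝ => Real.log (1 - y)) (-(1-x)⁻¹) x := by
    have := ((Real.hasDerivAt_log hx1.ne').comp x
      (((hasDerivAt_id x).const_sub 1)))
    simpa [Function.comp_def] using this
  have h := ((Real.hasDerivAt_log h0.ne').sub h1').div_const (2 * Real.pi)
  convert h using 1
  · rfl
  · rfl
  · rfl
  have hπ : Real.pi ≠ 0 := Real.pi_ne_zero
  have hx0 : x ≠ 0 := h0.ne'
  have hx1' : 1 - x ≠ 0 := hx1.ne'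
  field_simp
  ring

lemma psi_leftinv {ξ : ℝ} :
    Real.exp (2*Real.pi*ξ) / (1 + Real.exp (2*Real.pi*ξ)) ∈ Ioo (0:ℝ) 1 ∧
      ψfun (Real.exp (2*Real.pi*ξ) / (1 + Real.exp (2*Real.pi*ξ))) = ξ := by
  set e := Real.exp (2*Real.pi*ξ) with he
  have he0 : 0 < e := Real.exp_pos _
  have hd : 0 < 1 + e := by linarith
  constructor
  · constructor
    · positivity
    · rw [div_lt_one hd]; linarith
  · have h1 : (1:ℝ) - e/(1+e) = 1/(1+e) := by field_simp; ring
    rw [ψfun, h1]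
    rw [Real.log_div he0.ne' hd.ne', Real.log_div one_ne_zero hd.ne', Real.log_one]
    rw [he, Real.log_exp]
    field_simp
    ring

lemma psi_image : ψfun '' Ioo (0:ℝ) 1 = univ := by
  refine eq_univ_of_forall fun ξ => ?_
  exact ⟨_, psi_leftinv.1, psi_leftinv.2⟩

lemma psi_inj : InjOn ψfun (Ioo (0:ℝ) 1) := by
  have key : ∀ x ∈ Ioo (0:ℝ) 1, Real.exp (2*Real.pi*(ψfun x)) / (1 + Real.exp (2*Real.pi*(ψfun x))) = x := by
    intro x hx
    obtain ⟨h0, h1⟩ := hx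
    have hx1 : (0:ℝ) < 1 - x := by linarith
    have : 2*Real.pi*(ψfun x) = Real.log (x / (1-x)) := by
      rw [ψfun, Real.log_div h0.ne' hx1.ne']
      field_simp
    rw [this, Real.exp_log (by positivity)]
    have h1x : (1:ℝ) + x/(1-x) = 1/(1-x) := by field_simp; ring
    rw [h1x]
    field_simp
  intro a ha b hb h
  rw [← key a ha, ← key b hb, h]


lemma pointwise (s t : ℝ) {x : ℝ} (hx : x ∈ Ioo (0:ℝ) 1) :
    (|1 / (2 * Real.pi * (x * (1 - x)))| : ℝ) •
      (((Real.exp (2*Real.pi*s*(ψfun x)) / (1 + Real.exp (2*Real.pi*(ψfun x))) : ℝ) : ℂ) *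
        Complex.exp (-(2 * (Real.pi:ℂ) * Complex.I * (t:ℂ) * ((ψfun x : ℝ) : ℂ)))) =
    (2*Real.pi)⁻¹ • ((x:ℂ) ^ (((s:ℂ) - Complex.I*(t:ℂ)) - 1) *
      (1 - (x:ℂ)) ^ (-((s:ℂ) - Complex.I*(t:ℂ)))) := by
  obtain ⟨h0, h1⟩ := hx
  have hx1 : (0:ℝ) < 1 - x := by linarith
  have hπ : (0:ℝ) < 2 * Real.pi := by positivity
  have hπc : (Real.pi : ℂ) ≠ 0 := by exact_mod_cast Real.pi_ne_zero
  set a := Real.log x with ha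
  set b := Real.log (1 - x) with hb
  have hea : Real.exp a = x := Real.exp_log h0
  have heb : Real.exp b = 1 - x := Real.exp_log hx1
  have h2 : 2 * Real.pi * (ψfun x) = a - b := by
    rw [ψfun]; field_simp; rw [ha, hb]
  have h3 : 2 * Real.pi * s * (ψfun x) = s * (a - b) := by
    rw [show 2 * Real.pi * s * (ψfun x) = s * (2 * Real.pi * (ψfun x)) by ring, h2]
  have h4 : Real.exp (2 * Real.pi * (ψfun x)) = x / (1 - x) := by
    rw [h2, Real.exp_sub, hea, heb]
  have h5 : (1:ℝ) + x / (1 - x) = (1 - x)⁻¹ := by field_simp; ring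
  have habs : |1 / (2 * Real.pi * (x * (1 - x)))| = 1 / (2 * Real.pi * (x * (1 - x))) :=
    abs_of_pos (by positivity)
  set u : ℂ := (s:ℂ) - Complex.I*(t:ℂ) with hu
  have hR : (2*Real.pi)⁻¹ • ((x:ℂ) ^ (u - 1) * (1 - (x:ℂ)) ^ (-u)) =
      ((2*Real.pi:ℝ):ℂ)⁻¹ * Complex.exp (u * ((a:ℂ) - b) - a) := by
    have hcx : (x:ℂ) ^ (u - 1) = Complex.exp ((a:ℂ) * (u - 1)) := by
      rw [Complex.cpow_def_of_ne_zero (by exact_mod_cast h0.ne'), ← Complex.ofReal_log h0.le]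
    have hcy : (1 - (x:ℂ)) ^ (-u) = Complex.exp ((b:ℂ) * (-u)) := by
      have h' : (1 - (x:ℂ)) = ((1 - x : ℝ) : ℂ) := by push_cast; ring
      rw [h', Complex.cpow_def_of_ne_zero (by exact_mod_cast hx1.ne'),
        ← Complex.ofReal_log hx1.le]
    rw [hcx, hcy, real_smul, ← Complex.exp_add]
    push_cast
    ring_nf
  rw [hR]
  have harg : -(2 * (Real.pi:ℂ) * Complex.I * (t:ℂ) * ((ψfun x : ℝ) : ℂ)) =
      Complex.I * (t:ℂ) * ((b:ℂ) - a) := by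
    have : ((ψfun x : ℝ) : ℂ) = ((a:ℂ) - b) / (2 * (Real.pi:ℂ)) := by
      rw [ψfun]; push_cast; ring
    rw [this]; field_simp; ring
  rw [habs, h3, h4, h5, harg, real_smul]
  have hXc : (x:ℂ) = Complex.exp (a:ℂ) := by rw [← Complex.ofReal_exp, hea]
  have hYc : (1:ℂ) - (x:ℂ) = Complex.exp (b:ℂ) := by rw [← Complex.ofReal_exp, heb]; push_cast; ring
  have hSc : ((Real.exp (s*(a-b)) : ℝ) : ℂ) = Complex.exp ((s:ℂ)*((a:ℂ)-b)) := by
    rw [Complex.ofReal_exp]; congr 1; push_cast; ring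
  push_cast
  rw [hYc, hXc, div_inv_eq_mul]
  have h2πc : (2 * (Real.pi:ℂ)) ≠ 0 := by simpa using hπc
  field_simp [Complex.exp_ne_zero]
  rw [← Complex.exp_add, ← Complex.exp_add]
  refine congrArg Complex.exp ?_
  rw [hu]; ring

theorem fourier_transform_exp_div_one_add_exp (s t : ℝ) (hs0 : 0 < s) (hs1 : s < 1) :
    Integrable (fun ξ : ℝ =>
        Real.exp (2 * Real.pi * s * ξ) / (1 + Real.exp (2 * Real.pi * ξ))) ∧
      2 * ∫ ξ : ℝ,
          ((Real.exp (2 * Real.pi * s * ξ) / (1 + Real.exp (2 * Real.pi * ξ)) : ℝ) : ℂ) *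
            Complex.exp (-(2 * (Real.pi : ℂ) * Complex.I * (t : ℂ) * (ξ : ℂ))) =
        1 / Complex.sin ((Real.pi : ℂ) * ((s : ℂ) - Complex.I * (t : ℂ))) := by
  set u : ℂ := (s:ℂ) - Complex.I * (t:ℂ) with hu
  set F : ℝ → ℂ := fun ξ =>
    ((Real.exp (2 * Real.pi * s * ξ) / (1 + Real.exp (2 * Real.pi * ξ)) : ℝ) : ℂ) *
      Complex.exp (-(2 * (Real.pi : ℂ) * Complex.I * (t : ℂ) * (ξ : ℂ))) with hF
  set g : ℝ → ℂ := fun x => (x:ℂ) ^ (u - 1) * (1 - (x:ℂ)) ^ (-u) with hg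
  have hure : u.re = s := by simp [hu]
  have hu1re : (1 - u).re = 1 - s := by simp [hu]
  have hderiv : ∀ x ∈ Ioo (0:ℝ) 1,
      HasDerivWithinAt ψfun (1 / (2 * Real.pi * (x * (1 - x)))) (Ioo (0:ℝ) 1) x :=
    fun x hx => (psi_hasDeriv hx).hasDerivWithinAt
  have hgInt : IntegrableOn g (Ioo (0:ℝ) 1) := by
    have h := Complex.betaIntegral_convergent (u := u) (v := 1 - u)
      (by rw [hure]; exact hs0) (by rw [hu1re]; linarith)
    rw [show (1:ℂ) - u - 1 = -u by ring] at h
    exact ((intervalIntegrable_iff_integrableOn_Ioc_of_le zero_le_one).mp h).mono_set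
      Ioo_subset_Ioc_self
  have hpt : ∀ x ∈ Ioo (0:ℝ) 1,
      |1 / (2 * Real.pi * (x * (1 - x)))| • F (ψfun x) = (2*Real.pi)⁻¹ • g x :=
    fun x hx => pointwise s t hx
  have hFInt : Integrable F := by
    rw [← integrableOn_univ, ← psi_image,
      integrableOn_image_iff_integrableOn_abs_deriv_smul measurableSet_Ioo hderiv psi_inj]
    exact MeasureTheory.IntegrableOn.congr_fun (hgInt.smul ((2*Real.pi)⁻¹ : ℝ))
      (fun x hx => (hpt x hx).symm) measurableSet_Ioo
  constructor
  · have := hFInt.norm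
    refine this.congr (Filter.Eventually.of_forall fun ξ => ?_)
    simp only [hF, norm_mul, Complex.norm_exp, Complex.norm_real, Real.norm_eq_abs]
    have habs : |Real.exp (2 * Real.pi * s * ξ) / (1 + Real.exp (2 * Real.pi * ξ))| =
        Real.exp (2 * Real.pi * s * ξ) / (1 + Real.exp (2 * Real.pi * ξ)) :=
      abs_of_nonneg (by positivity)
    have hre : (-(2 * (Real.pi : ℂ) * Complex.I * (t : ℂ) * (ξ : ℂ))).re = 0 := by
      simp [Complex.mul_re, Complex.mul_im]
    rw [habs, hre, Real.exp_zero, mul_one]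
  · have hInt : ∫ ξ : ℝ, F ξ = (2*Real.pi)⁻¹ • ∫ x in Ioo (0:ℝ) 1, g x := by
      rw [← setIntegral_univ, ← psi_image,
        integral_image_eq_integral_abs_deriv_smul measurableSet_Ioo hderiv psi_inj F,
        setIntegral_congr_fun measurableSet_Ioo hpt, integral_smul]
    have hbeta : ∫ x in Ioo (0:ℝ) 1, g x = (Real.pi : ℂ) / Complex.sin ((Real.pi:ℂ) * u) := by
      have h1 : ∫ x in Ioo (0:ℝ) 1, g x = Complex.betaIntegral u (1 - u) := by
        rw [← MeasureTheory.integral_Ioc_eq_integral_Ioo, Complex.betaIntegral,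
          intervalIntegral.integral_of_le zero_le_one]
        refine setIntegral_congr_fun measurableSet_Ioc fun x hx => ?_
        rw [hg, show (1:ℂ) - u - 1 = -u by ring]
      have h2 := Complex.Gamma_mul_Gamma_eq_betaIntegral
        (s := u) (t := 1 - u) (by rw [hure]; exact hs0) (by rw [hu1re]; linarith)
      rw [add_sub_cancel, Complex.Gamma_one, one_mul] at h2
      rw [h1, ← h2, Complex.Gamma_mul_Gamma_one_sub]
    rw [hInt, hbeta]
    have hπc : (Real.pi : ℂ) ≠ 0 := by exact_mod_cast Real.pi_ne_zero
    rw [Complex.real_smul]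
    push_cast
    rw [mul_div_assoc', mul_div_assoc',
      show (2:ℂ) * ((2 * (Real.pi:ℂ))⁻¹ * (Real.pi:ℂ)) = 1 by field_simp]
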